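/- Assume $(b_n)$ is log-concave and strictly increasing, with the convention $b_{-1}=0$. Then $v_{k,l} \leq \prod_{j=1}^l \frac{b_{k+2j-2}}{b_{k+2j-1} - b_{k-1}}$ for all $k, l \geq 0$. -/

import Mathlib

/-- The coefficients `v_{k,l}`, defined via their initial values `v_{k,0} = 1`,
`v_{0,l} = ∏_{j=1}^l b_{2j-2}/b_{2j-1}` and recurrence
`v_{k+1,l} = (b_k/b_{k+2l}) v_{k,l} + (b_{k+2l-1}/b_{k+2l}) v_{k+1,l-1}`. -/
noncomputable def vsec (b : ℕ → ℝ) : ℕ → ℕ → ℝ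
  | 0, l => ∏ j ∈ Finset.range l, b (2 * j) / b (2 * j + 1)
  | _ + 1, 0 => 1
  | k + 1, l + 1 =>
      b k / b (k + 2 * (l + 1)) * vsec b k (l + 1) +
        b (k + 2 * l + 1) / b (k + 2 * (l + 1)) * vsec b (k + 1) l
  termination_by k l => (k, l)


noncomputable def Bprod (b : ℕ → ℝ) (k l : ℕ) : ℝ :=
  ∏ j ∈ Finset.range l, b (k + 2 * j) / (b (k + 2 * j + 1) - (if k = 0 then 0 else b (k - 1)))

lemma ratio_mono (b : ℕ → ℝ) (hb : ∀ n, 0 < b n)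
    (hlc : ∀ n : ℕ, b n * b (n + 2) ≤ b (n + 1) ^ 2) :
    ∀ m n : ℕ, m ≤ n → b m * b (n + 1) ≤ b (m + 1) * b n := by
  intro m n h
  induction n with
  | zero => interval_cases m; rw [mul_comm]
  | succ n ih =>
    rcases Nat.lt_or_ge m (n+1) with h' | h'
    · have h1 := ih (Nat.lt_succ_iff.mp h')
      have h2 := hlc n
      have p0 := hb m; have p1 := hb n; have p2 := hb (n+1); have p3 := hb (n+2)
      nlinarith [mul_pos p0 p1]
    · have : m = n + 1 := le_antisymm h h'
      subst this; rw [mul_comm]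

lemma den_pos (b : ℕ → ℝ) (hb : ∀ n, 0 < b n) (hmono : StrictMono b) (k j : ℕ) :
    0 < b (k + 2 * j + 1) - (if k = 0 then 0 else b (k - 1)) := by
  split
  · linarith [hb (k + 2 * j + 1)]
  · have : k - 1 < k + 2 * j + 1 := by omega
    linarith [hmono this]

lemma Bprod_pos (b : ℕ → ℝ) (hb : ∀ n, 0 < b n) (hmono : StrictMono b) (k l : ℕ) :
    0 < Bprod b k l := by
  apply Finset.prod_pos
  intro j _
  exact div_pos (hb _) (den_pos b hb hmono k j)

lemma Bprod_mono (b : ℕ → ℝ) (hb : ∀ n, 0 < b n) (hmono : StrictMono b)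
    (hlc : ∀ n : ℕ, b n * b (n + 2) ≤ b (n + 1) ^ 2) (k l : ℕ) :
    Bprod b k l ≤ Bprod b (k + 1) l := by
  apply Finset.prod_le_prod
  · intro j _; exact le_of_lt (div_pos (hb _) (den_pos b hb hmono k j))
  · intro j _
    have d1 := den_pos b hb hmono k j
    have d2 := den_pos b hb hmono (k+1) j
    rw [div_le_div_iff₀ d1 d2]
    have e1 : k + 1 + 2 * j = k + 2 * j + 1 := by omega
    have e2 : k + 1 + 2 * j + 1 = k + 2 * j + 2 := by omega
    rw [e2, e1]
    simp only [Nat.add_sub_cancel, if_neg (Nat.succ_ne_zero k)]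
    have hlc' := hlc (k + 2 * j)
    split
    · subst ‹k = 0›
      simp only [Nat.zero_add] at *
      nlinarith [hb (2*j), hb 0, hb (2*j+1)]
    · rename_i hk
      have hratio : b (k - 1) * b (k + 2 * j + 1) ≤ b k * b (k + 2 * j) := by
        have := ratio_mono b hb hlc (k - 1) (k + 2 * j) (by omega)
        have e3 : k - 1 + 1 = k := by omega
        rw [e3] at this; exact this
      nlinarith

/-- if `(b_n)` is log-concave and strictly increasing (with `b_{-1} = 0`),
then `v_{k,l} ≤ ∏_{j=1}^l b_{k+2j-2}/(b_{k+2j-1} - b_{k-1})` for all `k, l ≥ 0`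
(the product below is indexed by `j = 0,…,l-1`, corresponding to `j+1 = 1,…,l`). -/
theorem stmt13 (b : ℕ → ℝ) (hb : ∀ n, 0 < b n) (hmono : StrictMono b)
    (hlc : ∀ n : ℕ, b n * b (n + 2) ≤ b (n + 1) ^ 2) :
    ∀ k l : ℕ, vsec b k l ≤ ∏ j ∈ Finset.range l,
      b (k + 2 * j) / (b (k + 2 * j + 1) - (if k = 0 then 0 else b (k - 1))) := by
  have key : ∀ k l, vsec b k l ≤ Bprod b k l := by
    intro k
    induction k with
    | zero =>
      intro l
      rw [vsec, Bprod]
      simp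
    | succ k ihk =>
      intro l
      induction l with
      | zero => rw [vsec, Bprod]; simp
      | succ l ihl =>
        rw [vsec]
        have hXpos : 0 < b (k + 2 * (l + 1)) := hb _
        have h1 : vsec b k (l+1) ≤ Bprod b (k+1) (l+1) :=
          (ihk (l+1)).trans (Bprod_mono b hb hmono hlc k (l+1))
        have h2 : vsec b (k+1) l ≤ Bprod b (k+1) l := ihl
        have hbk := hb k
        have hs := hb (k + 2*l + 1)
        have step : Bprod b (k+1) (l+1) =
            Bprod b (k+1) l * (b (k + 2 * l + 1) / (b (k + 2 * (l + 1)) - b k)) := by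
          rw [Bprod, Bprod, Finset.prod_range_succ]
          congr 1
          have e2 : k + 1 + 2 * l + 1 = k + 2 * (l + 1) := by omega
          have e1 : k + 1 + 2 * l = k + 2 * l + 1 := by omega
          rw [e2, e1]
          simp [Nat.succ_ne_zero]
        have hXgt : b k < b (k + 2 * (l + 1)) := hmono (by omega)
        have hne1 : b (k + 2 * (l + 1)) ≠ 0 := ne_of_gt hXpos
        have hne2 : b (k + 2 * (l + 1)) - b k ≠ 0 := ne_of_gt (by linarith)
        calc b k / b (k + 2 * (l + 1)) * vsec b k (l+1)
              + b (k + 2*l + 1) / b (k + 2 * (l + 1)) * vsec b (k+1) l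
            ≤ b k / b (k + 2 * (l + 1)) * Bprod b (k+1) (l+1)
              + b (k + 2*l + 1) / b (k + 2 * (l + 1)) * Bprod b (k+1) l := by
              gcongr
          _ = Bprod b (k+1) (l+1) := by
              rw [step]
              field_simp
              ring
  intro k l
  exact key k l
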